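/- Lemma 5.2: Let n ≥ 1 and let Ω ⊂ ℝ^{2n} be a bounded domain. Let F⃗ : Ω → ℝ^{2n} be a measurable vector field and let u, v : Ω → ℝ be Lipschitz. For ε ∈ ℝ set u_ε = u + ε(v − u). Suppose ε₁ ≠ ε₂ are real numbers such that N(u_{ε₁})(x) = N(u_{ε₂})(x) for Lebesgue-a.e. x ∈ Ω ∖ (S(u_{ε₁}) ∪ S(u_{ε₂})). Then for j = 1, 2 one has (∇u_{ε_j}(x) + F⃗(x))* · (∇v(x) − ∇u(x)) = 0 for Lebesgue-a.e. x ∈ Ω. -/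

import Mathlib

open MeasureTheory
open scoped RealInnerProductSpace ENNReal

/-- For `G⃗ = (g₁, g₂, …, g_{2n−1}, g_{2n}) ∈ ℝ^{2n}`,
`G⃗* = (g₂, −g₁, g₄, −g₃, …, g_{2n}, −g_{2n−1})`. -/
noncomputable def starVec {n : ℕ} (G : EuclideanSpace ℝ (Fin (2 * n))) :
    EuclideanSpace ℝ (Fin (2 * n)) := WithLp.toLp 2 fun i : Fin (2 * n) =>
  if _ : i.val % 2 = 0 then G ⟨i.val + 1, by have := i.isLt; omega⟩
  else -G ⟨i.val - 1, by have := i.isLt; omega⟩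


def pairSwap {n : ℕ} (i : Fin (2 * n)) : Fin (2 * n) :=
  if h : i.val % 2 = 0 then ⟨i.val + 1, by have := i.isLt; omega⟩
  else ⟨i.val - 1, by have := i.isLt; omega⟩

lemma pairSwap_val {n : ℕ} (i : Fin (2 * n)) :
    (pairSwap i).val = if i.val % 2 = 0 then i.val + 1 else i.val - 1 := by
  rw [pairSwap]; split <;> rfl

lemma starVec_inner_self {n : ℕ} (G : EuclideanSpace ℝ (Fin (2 * n))) :
    ⟪starVec G, G⟫ = 0 := by
  rw [PiLp.inner_apply]
  simp only [RCLike.inner_apply, conj_trivial]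
  apply Finset.sum_ninvolution (g := pairSwap)
  · intro i
    by_cases h : i.val % 2 = 0
    · have h2 : (i.val + 1) % 2 ≠ 0 := by omega
      have hp : pairSwap i = ⟨i.val + 1, by have := i.isLt; omega⟩ := dif_pos h
      rw [hp]
      simp only [starVec, Fin.val_mk, PiLp.toLp_apply]
      rw [dif_pos h, dif_neg h2]
      have e : (⟨i.val + 1 - 1, by have := i.isLt; omega⟩ : Fin (2*n)) = i :=
        Fin.ext (by simp only [Fin.val_mk]; omega)
      rw [e]; ring
    · have hi : 1 ≤ i.val := by omega
      have h2 : (i.val - 1) % 2 = 0 := by omega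
      have hp : pairSwap i = ⟨i.val - 1, by have := i.isLt; omega⟩ := dif_neg h
      rw [hp]
      simp only [starVec, Fin.val_mk, PiLp.toLp_apply]
      rw [dif_neg h, dif_pos h2]
      have e : (⟨i.val - 1 + 1, by have := i.isLt; omega⟩ : Fin (2*n)) = i :=
        Fin.ext (by simp only [Fin.val_mk]; omega)
      rw [e]; ring
  · intro i _
    simp only [ne_eq, Fin.ext_iff, pairSwap_val]
    split <;> omega
  · intro _; exact Finset.mem_univ _
  · intro i
    apply Fin.ext
    rw [pairSwap_val, pairSwap_val]
    have := i.isLt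
    split <;> split <;> omega

lemma starVec_zero {n : ℕ} : starVec (0 : EuclideanSpace ℝ (Fin (2 * n))) = 0 := by
  ext i
  simp only [starVec, PiLp.toLp_apply]
  split <;> simp

/-- The vector field `∇u_ε + F⃗` where `u_ε = u + ε (v − u)`, with the a.e. identity
`∇u_ε = ∇u + ε(∇v − ∇u)`. -/
noncomputable def gradSeg {n : ℕ} (u v : EuclideanSpace ℝ (Fin (2 * n)) → ℝ)
    (F : EuclideanSpace ℝ (Fin (2 * n)) → EuclideanSpace ℝ (Fin (2 * n))) (ε : ℝ)
    (x : EuclideanSpace ℝ (Fin (2 * n))) : EuclideanSpace ℝ (Fin (2 * n)) :=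
  gradient u x + ε • (gradient v x - gradient u x) + F x

/-- The singular set `S(u_ε) = {x ∈ Ω : ∇u_ε + F⃗ = 0}` of `u_ε = u + ε (v − u)`. -/
def singSetSeg {n : ℕ} (Ω : Set (EuclideanSpace ℝ (Fin (2 * n))))
    (u v : EuclideanSpace ℝ (Fin (2 * n)) → ℝ)
    (F : EuclideanSpace ℝ (Fin (2 * n)) → EuclideanSpace ℝ (Fin (2 * n))) (ε : ℝ) :
    Set (EuclideanSpace ℝ (Fin (2 * n))) :=
  {x ∈ Ω | gradSeg u v F ε x = 0}

/-- **Lemma 5.2**: if the unit normals `N(u_{ε₁})` and `N(u_{ε₂})` agree a.e. on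
`Ω ∖ (S(u_{ε₁}) ∪ S(u_{ε₂}))` for some `ε₁ ≠ ε₂`, then for `j = 1, 2`,
`(∇u_{ε_j} + F⃗)* · (∇v − ∇u) = 0` a.e. in `Ω`. -/
theorem star_inner_eq_zero_of_normals_agree {n : ℕ} (hn : 1 ≤ n)
    (Ω : Set (EuclideanSpace ℝ (Fin (2 * n))))
    (hΩopen : IsOpen Ω) (hΩbdd : Bornology.IsBounded Ω)
    (hΩne : Ω.Nonempty) (hΩconn : IsConnected Ω)
    (F : EuclideanSpace ℝ (Fin (2 * n)) → EuclideanSpace ℝ (Fin (2 * n)))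
    (hFmeas : Measurable F)
    (u v : EuclideanSpace ℝ (Fin (2 * n)) → ℝ)
    (hu : ∃ K, LipschitzOnWith K u Ω) (hv : ∃ K, LipschitzOnWith K v Ω)
    (ε₁ ε₂ : ℝ) (hne : ε₁ ≠ ε₂)
    (hagree : ∀ᵐ x ∂(volume.restrict
        (Ω \ (singSetSeg Ω u v F ε₁ ∪ singSetSeg Ω u v F ε₂))),
      ‖gradSeg u v F ε₁ x‖⁻¹ • gradSeg u v F ε₁ x =
        ‖gradSeg u v F ε₂ x‖⁻¹ • gradSeg u v F ε₂ x) :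
    (∀ᵐ x ∂(volume.restrict Ω),
        ⟪starVec (gradSeg u v F ε₁ x), gradient v x - gradient u x⟫ = 0) ∧
    (∀ᵐ x ∂(volume.restrict Ω),
        ⟪starVec (gradSeg u v F ε₂ x), gradient v x - gradient u x⟫ = 0) := by
  -- measurability of the gradient vector fields
  have hgu : Measurable (gradient u) :=
    ((InnerProductSpace.toDual ℝ
      (EuclideanSpace ℝ (Fin (2 * n)))).symm.continuous.measurable).comp
      (measurable_fderiv ℝ u)
  have hgv : Measurable (gradient v) :=
    ((InnerProductSpace.toDual ℝ
      (EuclideanSpace ℝ (Fin (2 * n)))).symm.continuous.measurable).comp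
      (measurable_fderiv ℝ v)
  have hG : ∀ ε : ℝ, Measurable (gradSeg u v F ε) := fun ε =>
    (hgu.add (((hgv.sub hgu)).const_smul ε)).add hFmeas
  have hS : ∀ ε : ℝ, MeasurableSet (singSetSeg Ω u v F ε) := fun ε =>
    hΩopen.measurableSet.inter ((hG ε) (measurableSet_singleton 0))
  have hD : MeasurableSet
      (Ω \ (singSetSeg Ω u v F ε₁ ∪ singSetSeg Ω u v F ε₂)) :=
    hΩopen.measurableSet.diff ((hS ε₁).union (hS ε₂))
  have hag := (ae_restrict_iff' hD).mp hagree
  have main : ∀ᵐ x ∂(volume.restrict Ω),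
      ⟪starVec (gradSeg u v F ε₁ x), gradient v x - gradient u x⟫ = 0 ∧
      ⟪starVec (gradSeg u v F ε₂ x), gradient v x - gradient u x⟫ = 0 := by
    rw [ae_restrict_iff' hΩopen.measurableSet]
    filter_upwards [hag] with x hx hxΩ
    set G₁ := gradSeg u v F ε₁ x with hG₁
    set G₂ := gradSeg u v F ε₂ x with hG₂
    set w := gradient v x - gradient u x with hwdef
    have hdiff : G₁ - G₂ = (ε₁ - ε₂) • w := by
      rw [hG₁, hG₂, hwdef]
      simp only [gradSeg]
      module
    have hw : w = (ε₁ - ε₂)⁻¹ • (G₁ - G₂) := by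
      rw [hdiff, smul_smul, inv_mul_cancel₀ (sub_ne_zero.mpr hne), one_smul]
    have key : ⟪starVec G₁, G₂⟫ = 0 ∧ ⟪starVec G₂, G₁⟫ = 0 := by
      by_cases h1 : G₁ = 0
      · rw [h1, starVec_zero]
        simp
      · by_cases h2 : G₂ = 0
        · rw [h2, starVec_zero]
          simp
        · have hxD : x ∈ Ω \ (singSetSeg Ω u v F ε₁ ∪ singSetSeg Ω u v F ε₂) := by
            refine ⟨hxΩ, ?_⟩
            rintro (⟨-, h⟩ | ⟨-, h⟩)
            · exact h1 h
            · exact h2 h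
          have heq := hx hxD
          have hb1 : ‖G₁‖ ≠ 0 := norm_ne_zero_iff.mpr h1
          have hb2 : ‖G₂‖ ≠ 0 := norm_ne_zero_iff.mpr h2
          have e21 : G₂ = ‖G₂‖ • (‖G₁‖⁻¹ • G₁) := by
            rw [heq, smul_inv_smul₀ hb2]
          have e12 : G₁ = ‖G₁‖ • (‖G₂‖⁻¹ • G₂) := by
            rw [← heq, smul_inv_smul₀ hb1]
          constructor
          · rw [e21, real_inner_smul_right, real_inner_smul_right,
              starVec_inner_self]
            ring
          · rw [e12, real_inner_smul_right, real_inner_smul_right,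
              starVec_inner_self]
            ring
    constructor
    · rw [hw, real_inner_smul_right, inner_sub_right, starVec_inner_self, key.1]
      ring
    · rw [hw, real_inner_smul_right, inner_sub_right, starVec_inner_self, key.2]
      ring
  exact ⟨main.mono fun x h => h.1, main.mono fun x h => h.2⟩
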